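/- Let A be a Banach algebra which is a left ideal of a Banach algebra B, and suppose A has a bounded left approximate identity (f_i). Suppose further that there is a Banach space S on which A acts such that A·S is dense in S and the topology of pointwise convergence on S restricted to A is weaker than the left strict topology on M_l(A). Then for every l ∈ M_l(A), the net (l(f_i)) converges pointwise on S to a bounded functional Ψ(l) with ‖Ψ(l)‖ ≤ ‖l‖·sup_i ‖f_i‖, and the resulting map Ψ : M_l(A) → S* is a continuous right inverse of the canonical map, so the canonical map from the relevant functional space to M_l(A) is bijective. -/

import Mathlib

open Filter Topology

/-- abstract form of Theorem 2.8(c): Let `A` be a Banach algebra with a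
bounded left approximate identity `(fᵢ)`, acting on a Banach space `S₀` (by `act`), and
embedded in the functionals on `S₀` by a pairing `P` compatible with the action
(`P g (act h s) = P (g h) s`) such that `A · S₀` is total in `S₀` and the topology of
pointwise convergence on `S₀`, restricted to `A`, is weaker than the left strict
topology of `M_l(A)`.  Then for every left multiplier `L` of `A` the net `(L fᵢ)`
converges pointwise on `S₀` to a bounded functional `Ψ(L)` with
`‖Ψ(L)‖ ≤ ‖L‖ · sup ‖fᵢ‖`, and `Ψ` is a (two-sided, by uniqueness) inverse of the
canonical map `h ↦ (left convolution by h)`, so the canonical map is bijective. -/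
theorem left_multipliers_from_approx_identity
    (A : Type) [NonUnitalNormedRing A] [NormedSpace ℝ A]
    [IsScalarTower ℝ A A] [SMulCommClass ℝ A A] [CompleteSpace A]
    (S₀ : Type) [NormedAddCommGroup S₀] [NormedSpace ℝ S₀] [CompleteSpace S₀]
    (act : A →ₗ[ℝ] S₀ →ₗ[ℝ] S₀)
    (hact_norm : ∀ (a : A) (s : S₀), ‖act a s‖ ≤ ‖a‖ * ‖s‖)
    (P : A →ₗ[ℝ] (S₀ →L[ℝ] ℝ))
    (hP_isom : ∀ a : A, ‖P a‖ = ‖a‖)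
    (hP_mul : ∀ (g h : A) (s : S₀), P g (act h s) = P (g * h) s)
    (hdense : Dense (↑(Submodule.span ℝ {x : S₀ | ∃ (a : A) (s : S₀), x = act a s}) : Set S₀))
    (hweaker : ∀ (κ : Type) (m : Filter κ), m.NeBot → ∀ (g : κ → A) (g₀ : A),
        (∀ a : A, Tendsto (fun j => ‖g j * a - g₀ * a‖) m (𝓝 0)) →
        ∀ s : S₀, Tendsto (fun j => P (g j) s) m (𝓝 (P g₀ s)))
    (ι : Type) (l : Filter ι) [l.NeBot] (f : ι → A) (C : ℝ)
    (hbdd : ∀ i, ‖f i‖ ≤ C)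
    (happrox : ∀ a : A, Tendsto (fun i => ‖f i * a - a‖) l (𝓝 0)) :
    ∀ L : A →L[ℝ] A, (∀ a b : A, L (a * b) = L a * b) →
      ∃ φ : S₀ →L[ℝ] ℝ,
        (∀ s : S₀, Tendsto (fun i => P (L (f i)) s) l (𝓝 (φ s))) ∧
        ‖φ‖ ≤ ‖L‖ * C ∧
        (∀ (a : A) (s : S₀), P (L a) s = φ (act a s)) ∧
        ∀ φ' : S₀ →L[ℝ] ℝ, (∀ (a : A) (s : S₀), P (L a) s = φ' (act a s)) → φ' = φ := by
  intro L hL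
  obtain ⟨i₀⟩ : Nonempty ι := nonempty_of_neBot l
  have hC : 0 ≤ C := le_trans (norm_nonneg _) (hbdd i₀)
  set M : ℝ := ‖L‖ * C with hM
  have hM0 : 0 ≤ M := mul_nonneg (norm_nonneg _) hC
  -- uniform bound on the functionals
  have hbound : ∀ i (s : S₀), |P (L (f i)) s| ≤ M * ‖s‖ := by
    intro i s
    calc |P (L (f i)) s| = ‖P (L (f i)) s‖ := rfl
      _ ≤ ‖P (L (f i))‖ * ‖s‖ := (P (L (f i))).le_opNorm s
      _ ≤ M * ‖s‖ := by
          apply mul_le_mul_of_nonneg_right _ (norm_nonneg s)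
          rw [hP_isom]
          calc ‖L (f i)‖ ≤ ‖L‖ * ‖f i‖ := L.le_opNorm _
            _ ≤ ‖L‖ * C := mul_le_mul_of_nonneg_left (hbdd i) (norm_nonneg _)
  -- convergence on generators
  have hgen : ∀ (a : A) (s : S₀),
      Tendsto (fun i => P (L (f i)) (act a s)) l (𝓝 (P (L a) s)) := by
    intro a s
    have hkey : ∀ i, P (L (f i)) (act a s) = P (L (f i * a)) s := by
      intro i; rw [hP_mul, ← hL]
    simp only [hkey]
    rw [tendsto_iff_norm_sub_tendsto_zero]
    have hb : ∀ i, ‖P (L (f i * a)) s - P (L a) s‖ ≤ ‖L‖ * ‖s‖ * ‖f i * a - a‖ := by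
      intro i
      have : P (L (f i * a)) s - P (L a) s = P (L (f i * a) - L a) s := by
        rw [map_sub]; simp
      rw [this]
      calc ‖P (L (f i * a) - L a) s‖ ≤ ‖P (L (f i * a) - L a)‖ * ‖s‖ :=
            (P _).le_opNorm s
        _ = ‖L (f i * a) - L a‖ * ‖s‖ := by rw [hP_isom]
        _ = ‖L (f i * a - a)‖ * ‖s‖ := by rw [map_sub]
        _ ≤ (‖L‖ * ‖f i * a - a‖) * ‖s‖ :=
            mul_le_mul_of_nonneg_right (L.le_opNorm _) (norm_nonneg s)
        _ = ‖L‖ * ‖s‖ * ‖f i * a - a‖ := by ring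
    have h0 : Tendsto (fun i => ‖L‖ * ‖s‖ * ‖f i * a - a‖) l (𝓝 0) := by
      have := (happrox a).const_mul (‖L‖ * ‖s‖)
      simpa using this
    exact squeeze_zero (fun i => norm_nonneg _) hb h0
  -- convergence on the span
  have hspan : ∀ t ∈ Submodule.span ℝ {x : S₀ | ∃ (a : A) (s : S₀), x = act a s},
      ∃ c : ℝ, Tendsto (fun i => P (L (f i)) t) l (𝓝 c) := by
    intro t ht
    induction ht using Submodule.span_induction with
    | mem x hx =>
        obtain ⟨a, s, rfl⟩ := hx
        exact ⟨P (L a) s, hgen a s⟩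
    | zero => exact ⟨0, by simpa using tendsto_const_nhds⟩
    | add x y hx hy ihx ihy =>
        obtain ⟨c, hc⟩ := ihx; obtain ⟨d, hd⟩ := ihy
        exact ⟨c + d, by simpa [map_add] using hc.add hd⟩
    | smul r x hx ihx =>
        obtain ⟨c, hc⟩ := ihx
        exact ⟨r * c, by simpa [map_smul, smul_eq_mul] using hc.const_mul r⟩
  -- convergence everywhere, via a Cauchy argument
  have hconv : ∀ s : S₀, ∃ c : ℝ, Tendsto (fun i => P (L (f i)) s) l (𝓝 c) := by
    intro s
    rw [← cauchy_map_iff_exists_tendsto]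
    rw [Metric.cauchy_iff]
    refine ⟨Filter.map_neBot, fun ε hε => ?_⟩
    have hM1 : (0:ℝ) < M + 1 := by linarith
    have hδ : 0 < ε / (6 * (M + 1)) := by positivity
    obtain ⟨t, ht, hts⟩ := hdense.exists_dist_lt s hδ
    obtain ⟨c, hc⟩ := hspan t ht
    have hU : {i | |P (L (f i)) t - c| < ε / 6} ∈ l := by
      have := hc (Metric.ball_mem_nhds c (by positivity : (0:ℝ) < ε / 6))
      exact this
    refine ⟨(fun i => P (L (f i)) s) '' {i | |P (L (f i)) t - c| < ε / 6},
        image_mem_map hU, ?_⟩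
    rintro x ⟨i, hi, rfl⟩ y ⟨j, hj, rfl⟩
    have hst : ‖s - t‖ < ε / (6 * (M + 1)) := by
      simpa [dist_eq_norm] using hts
    have key : ∀ k, |P (L (f k)) t - c| < ε / 6 →
        |P (L (f k)) s - c| < ε / 3 := by
      intro k hk
      have h1 : |P (L (f k)) s - P (L (f k)) t| ≤ M * ‖s - t‖ := by
        have : P (L (f k)) s - P (L (f k)) t = P (L (f k)) (s - t) := by
          rw [map_sub]
        rw [this]; exact hbound k _
      have h2 : M * ‖s - t‖ ≤ (M + 1) * (ε / (6 * (M + 1))) := by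
        apply mul_le_mul (by linarith) (le_of_lt hst) (norm_nonneg _) (by linarith)
      have h3 : (M + 1) * (ε / (6 * (M + 1))) = ε / 6 := by
        field_simp
      calc |P (L (f k)) s - c|
          ≤ |P (L (f k)) s - P (L (f k)) t| + |P (L (f k)) t - c| := abs_sub_le _ _ _
        _ < ε / 6 + ε / 6 := by
            have := h1.trans (h2.trans_eq h3); linarith
        _ = ε / 3 := by ring
    have hi' := key i hi
    have hj' := key j hj
    rw [Real.dist_eq]
    calc |P (L (f i)) s - P (L (f j)) s|
        ≤ |P (L (f i)) s - c| + |c - P (L (f j)) s| := abs_sub_le _ _ _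
      _ = |P (L (f i)) s - c| + |P (L (f j)) s - c| := by rw [abs_sub_comm c]
      _ < ε / 3 + ε / 3 := add_lt_add hi' hj'
      _ < ε := by linarith
  choose ψ hψ using hconv
  -- ψ is linear and bounded
  have hadd : ∀ s s' : S₀, ψ (s + s') = ψ s + ψ s' := by
    intro s s'
    refine tendsto_nhds_unique (hψ (s + s')) ?_
    have := (hψ s).add (hψ s')
    simpa [map_add] using this
  have hsmul : ∀ (r : ℝ) (s : S₀), ψ (r • s) = r • ψ s := by
    intro r s
    refine tendsto_nhds_unique (hψ (r • s)) ?_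
    have := (hψ s).const_mul r
    simpa [map_smul, smul_eq_mul] using this
  have hψbd : ∀ s : S₀, ‖ψ s‖ ≤ M * ‖s‖ := by
    intro s
    have : Tendsto (fun i => |P (L (f i)) s|) l (𝓝 |ψ s|) := (hψ s).abs
    exact le_of_tendsto this (Eventually.of_forall fun i => hbound i s)
  let φ : S₀ →L[ℝ] ℝ :=
    LinearMap.mkContinuous ⟨⟨ψ, fun x y => hadd x y⟩, fun r s => hsmul r s⟩ M hψbd
  have hφconv : ∀ s : S₀, Tendsto (fun i => P (L (f i)) s) l (𝓝 (φ s)) := hψ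
  have hφP : ∀ (a : A) (s : S₀), P (L a) s = φ (act a s) := fun a s =>
    tendsto_nhds_unique (hgen a s) (hψ (act a s))
  refine ⟨φ, hφconv, LinearMap.mkContinuous_norm_le _ hM0 _, hφP, ?_⟩
  intro φ' hφ'
  have heq : Set.EqOn (⇑φ') (⇑φ)
      (↑(Submodule.span ℝ {x : S₀ | ∃ (a : A) (s : S₀), x = act a s}) : Set S₀) := by
    intro x hx
    induction hx using Submodule.span_induction with
    | mem x hx =>
        obtain ⟨a, s, rfl⟩ := hx
        rw [← hφ' a s, hφP a s]
    | zero => simp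
    | add x y hx hy ihx ihy => simp [map_add, ihx, ihy]
    | smul r x hx ihx => simp [map_smul, ihx]
  have := Continuous.ext_on hdense φ'.continuous φ.continuous heq
  ext s
  exact congrFun this s
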